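/- arXiv:2302.01998 — 2 statements merged into one kernel-verified Lean document; each statement's English description precedes it below -/
import Mathlib

section
/- If A has an eigenvalue with strictly positive real part and Φ is positive definite, then trace(e^{A τ} Φ e^{Aᴴ τ}) → ∞ as τ → ∞. -/
open scoped Matrix ComplexOrder

lemma exp_mulVec_eigen {n : ℕ} (B : Matrix (Fin n) (Fin n) ℂ) (μ : ℂ) (v : Fin n → ℂ)
    (hv : B *ᵥ v = μ • v) :
    NormedSpace.exp B *ᵥ v = Complex.exp μ • v := by
  letI : SeminormedRing (Matrix (Fin n) (Fin n) ℂ) := Matrix.linftyOpSemiNormedRing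
  letI : NormedRing (Matrix (Fin n) (Fin n) ℂ) := Matrix.linftyOpNormedRing
  letI : NormedAlgebra ℂ (Matrix (Fin n) (Fin n) ℂ) := Matrix.linftyOpNormedAlgebra
  have hpow : ∀ k : ℕ, B ^ k *ᵥ v = μ ^ k • v := by
    intro k
    induction k with
    | zero => simp
    | succ k ih =>
      rw [pow_succ', ← Matrix.mulVec_mulVec, ih, Matrix.mulVec_smul, hv, smul_smul, pow_succ]
  let f : Matrix (Fin n) (Fin n) ℂ →ₗ[ℂ] (Fin n → ℂ) :=
    { toFun := fun M => M *ᵥ v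
      map_add' := fun M N => Matrix.add_mulVec M N v
      map_smul' := fun c M => Matrix.smul_mulVec c M v }
  let F := LinearMap.toContinuousLinearMap f
  have hsum : Summable fun k : ℕ => ((k.factorial : ℂ))⁻¹ • B ^ k :=
    NormedSpace.expSeries_summable' B
  have hsum2 : Summable fun k : ℕ => ((k.factorial : ℂ))⁻¹ * μ ^ k := by
    simpa [smul_eq_mul] using NormedSpace.expSeries_summable' (𝕂 := ℂ) μ
  have h1 : NormedSpace.exp B *ᵥ v = ∑' k : ℕ, ((k.factorial : ℂ))⁻¹ • (B ^ k *ᵥ v) := by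
    rw [NormedSpace.exp_eq_tsum (𝕂 := ℂ)]
    change F (∑' k : ℕ, ((k.factorial : ℂ))⁻¹ • B ^ k) = _
    rw [F.map_tsum hsum]
    simp [F, f]
  rw [h1]
  have h2 : ∀ k : ℕ, ((k.factorial : ℂ))⁻¹ • (B ^ k *ᵥ v) = (((k.factorial : ℂ))⁻¹ * μ ^ k) • v := by
    intro k; rw [hpow, smul_smul]
  simp_rw [h2]
  rw [hsum2.tsum_smul_const]
  congr 1
  rw [Complex.exp_eq_exp_ℂ, NormedSpace.exp_eq_tsum (𝕂 := ℂ)]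
  simp [smul_eq_mul]

open scoped MatrixOrder in
lemma quad_le_trace {n : ℕ} {N : Matrix (Fin n) (Fin n) ℂ} (hN : N.PosSemidef) (v : Fin n → ℂ) :
    (dotProduct (star v) (N *ᵥ v)).re
      ≤ (∑ j, Complex.normSq (v j)) * (Matrix.trace N).re := by
  set S := CFC.sqrt N with hSdef
  have hSS : S * S = N := CFC.sqrt_mul_sqrt_self N hN.nonneg
  have hSh : S.IsHermitian := (Matrix.nonneg_iff_posSemidef.mp (CFC.sqrt_nonneg N)).1
  set w := S *ᵥ v with hw
  have h1 : dotProduct (star v) (N *ᵥ v) = dotProduct (star w) w := by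
    rw [← hSS, ← Matrix.mulVec_mulVec, Matrix.dotProduct_mulVec, hw,
      Matrix.star_mulVec, hSh.eq]
  have h2 : (dotProduct (star w) w).re = ∑ i, Complex.normSq (w i) := by
    simp [dotProduct, Complex.normSq_eq_conj_mul_self, Complex.normSq_apply]
  have htr : (Matrix.trace N).re = ∑ i, ∑ j, Complex.normSq (S i j) := by
    have hS : ∀ i j, S j i = starRingEnd ℂ (S i j) := by
      intro i j
      have := congrFun (congrFun hSh j) i
      simpa [Matrix.conjTranspose_apply] using this.symm
    rw [← hSS]
    simp only [Matrix.trace, Matrix.diag, Matrix.mul_apply, Complex.re_sum]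
    refine Finset.sum_congr rfl fun i _ => ?_
    refine Finset.sum_congr rfl fun j _ => ?_
    rw [hS j i]
    simp [Complex.mul_conj, Complex.normSq]
  have h3 : ∀ i, Complex.normSq (w i)
      ≤ (∑ j, Complex.normSq (S i j)) * (∑ j, Complex.normSq (v j)) := by
    intro i
    have hnorm : ‖w i‖ ≤ ∑ j, ‖S i j‖ * ‖v j‖ := by
      have hwi : w i = ∑ j, S i j * v j := rfl
      rw [hwi]
      calc ‖∑ j, S i j * v j‖ ≤ ∑ j, ‖S i j * v j‖ :=
            norm_sum_le _ _
        _ = ∑ j, ‖S i j‖ * ‖v j‖ := by simp [map_mul]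
    have hcs : (∑ j, ‖S i j‖ * ‖v j‖) ^ 2
        ≤ (∑ j, ‖S i j‖ ^ 2) * (∑ j, ‖v j‖ ^ 2) :=
      Finset.sum_mul_sq_le_sq_mul_sq _ _ _
    calc Complex.normSq (w i) = ‖w i‖ ^ 2 := (Complex.sq_norm _).symm
      _ ≤ (∑ j, ‖S i j‖ * ‖v j‖) ^ 2 := by
          apply pow_le_pow_left₀ (norm_nonneg _) hnorm
      _ ≤ (∑ j, ‖S i j‖ ^ 2) * (∑ j, ‖v j‖ ^ 2) := hcs
      _ = (∑ j, Complex.normSq (S i j)) * (∑ j, Complex.normSq (v j)) := by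
          simp [Complex.sq_norm]
  rw [h1, h2, htr]
  calc ∑ i, Complex.normSq (w i)
      ≤ ∑ i, (∑ j, Complex.normSq (S i j)) * (∑ j, Complex.normSq (v j)) :=
        Finset.sum_le_sum fun i _ => h3 i
    _ = (∑ j, Complex.normSq (v j)) * ∑ i, ∑ j, Complex.normSq (S i j) := by
        rw [← Finset.sum_mul]; ring

lemma conjTranspose_eigenvec {n : ℕ} (A : Matrix (Fin n) (Fin n) ℂ) (μ : ℂ)
    (hμ : μ ∈ spectrum ℂ A) :
    ∃ v : Fin n → ℂ, v ≠ 0 ∧ Aᴴ *ᵥ v = (starRingEnd ℂ μ) • v := by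
  have h1 : ¬ IsUnit (algebraMap ℂ (Matrix (Fin n) (Fin n) ℂ) μ - A) := spectrum.mem_iff.mp hμ
  have hdet : (μ • (1 : Matrix (Fin n) (Fin n) ℂ) - A).det = 0 := by
    by_contra hd
    exact h1 (by
      rw [Algebra.algebraMap_eq_smul_one]
      exact (Matrix.isUnit_iff_isUnit_det _).mpr (isUnit_iff_ne_zero.mpr hd))
  have hdet2 : ((starRingEnd ℂ μ) • (1 : Matrix (Fin n) (Fin n) ℂ) - Aᴴ).det = 0 := by
    have : (starRingEnd ℂ μ) • (1 : Matrix (Fin n) (Fin n) ℂ) - Aᴴ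
        = (μ • (1 : Matrix (Fin n) (Fin n) ℂ) - A)ᴴ := by
      rw [Matrix.conjTranspose_sub, Matrix.conjTranspose_smul, Matrix.conjTranspose_one]
      rfl
    rw [this, Matrix.det_conjTranspose, hdet, star_zero]
  obtain ⟨v, hv0, hv⟩ := (Matrix.exists_mulVec_eq_zero_iff).mpr hdet2
  refine ⟨v, hv0, ?_⟩
  rw [Matrix.sub_mulVec, sub_eq_zero, Matrix.smul_mulVec, Matrix.one_mulVec] at hv
  exact hv.symm

open scoped Matrix ComplexOrder in
/-- If A has an eigenvalue with positive real part and Φ is positive definite, then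
trace(e^{Aτ} Φ e^{Aᴴτ}) → ∞ as τ → ∞. -/
theorem stmt6 {n : ℕ} (A Φ : Matrix (Fin n) (Fin n) ℂ)
    (hunstab : ∃ μ : ℂ, μ ∈ spectrum ℂ A ∧ 0 < Complex.re μ)
    (hΦ : Φ.PosDef) :
    Filter.Tendsto
      (fun τ : ℝ => (Matrix.trace (NormedSpace.exp (τ • A) * Φ * NormedSpace.exp (τ • Aᴴ))).re)
      Filter.atTop Filter.atTop := by
  obtain ⟨μ, hμ, hre⟩ := hunstab
  obtain ⟨v, hv0, hv⟩ := conjTranspose_eigenvec A μ hμ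
  set s : ℝ := ∑ j, Complex.normSq (v j) with hs
  have hspos : 0 < s := by
    obtain ⟨j, hj⟩ := Function.ne_iff.mp hv0
    refine Finset.sum_pos' (fun i _ => Complex.normSq_nonneg _) ⟨j, Finset.mem_univ j, ?_⟩
    exact Complex.normSq_pos.mpr hj
  set q0 : ℝ := (dotProduct (star v) (Φ *ᵥ v)).re with hq0
  have hq0pos : 0 < q0 := hΦ.re_dotProduct_pos hv0
  set c : ℝ := q0 / s with hc
  have hcpos : 0 < c := div_pos hq0pos hspos
  -- pointwise lower bound
  have key : ∀ τ : ℝ,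
      c * Real.exp (2 * μ.re * τ)
        ≤ (Matrix.trace (NormedSpace.exp (τ • A) * Φ * NormedSpace.exp (τ • Aᴴ))).re := by
    intro τ
    set M := NormedSpace.exp (τ • A) with hM
    have hMH : NormedSpace.exp (τ • Aᴴ) = Mᴴ := by
      have h1 : τ • Aᴴ = (τ • A)ᴴ := by
        rw [Matrix.conjTranspose_smul]
        congr 1
      rw [h1, hM, Matrix.exp_conjTranspose]
    -- eigen equation for Mᴴ
    have heig : (τ • Aᴴ) *ᵥ v = ((τ : ℂ) * starRingEnd ℂ μ) • v := by
      have h2 : τ • Aᴴ = (τ : ℂ) • Aᴴ := (algebraMap_smul ℂ τ Aᴴ).symm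
      rw [h2, Matrix.smul_mulVec, hv, smul_smul]
    have hMv : Mᴴ *ᵥ v = Complex.exp ((τ : ℂ) * starRingEnd ℂ μ) • v := by
      rw [← hMH]
      exact exp_mulVec_eigen _ _ _ heig
    set e : ℂ := Complex.exp ((τ : ℂ) * starRingEnd ℂ μ) with he
    -- quadratic form value
    have hquad : dotProduct (star v) ((M * Φ * Mᴴ) *ᵥ v)
        = (Complex.normSq e : ℂ) * dotProduct (star v) (Φ *ᵥ v) := by
      have hstar : star v ᵥ* M = star (Mᴴ *ᵥ v) := by
        rw [Matrix.star_mulVec, Matrix.conjTranspose_conjTranspose]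
      rw [← Matrix.mulVec_mulVec, ← Matrix.mulVec_mulVec, hMv,
        Matrix.dotProduct_mulVec (star v) M, hstar, hMv,
        star_smul, Matrix.mulVec_smul, smul_dotProduct, dotProduct_smul,
        smul_smul, smul_eq_mul]
      congr 1
      rw [Complex.star_def, mul_comm, Complex.mul_conj]
    have hnormSq : Complex.normSq e = Real.exp (2 * μ.re * τ) := by
      rw [he, ← Complex.sq_norm, Complex.norm_exp]
      rw [← Real.exp_nat_mul]
      · congr 1
        simp [Complex.mul_re]
        ring
    have hPSD : (M * Φ * Mᴴ).PosSemidef := hΦ.posSemidef.mul_mul_conjTranspose_same M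
    have hle := quad_le_trace hPSD v
    have hqre : (dotProduct (star v) ((M * Φ * Mᴴ) *ᵥ v)).re
        = Real.exp (2 * μ.re * τ) * q0 := by
      rw [hquad, hnormSq, hq0]
      simp only [Complex.mul_re, Complex.ofReal_re, Complex.ofReal_im, zero_mul, sub_zero]
    rw [hqre] at hle
    rw [hMH]
    rw [hc, div_mul_eq_mul_div, div_le_iff₀ hspos]
    calc q0 * Real.exp (2 * μ.re * τ) = Real.exp (2 * μ.re * τ) * q0 := by ring
      _ ≤ s * (Matrix.trace (M * Φ * Mᴴ)).re := hle
      _ = (Matrix.trace (M * Φ * Mᴴ)).re * s := by ring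
  refine Filter.tendsto_atTop_mono key ?_
  have h1 : Filter.Tendsto (fun τ : ℝ => 2 * μ.re * τ) Filter.atTop Filter.atTop :=
    Filter.Tendsto.const_mul_atTop (by linarith) Filter.tendsto_id
  have h2 : Filter.Tendsto (fun τ : ℝ => Real.exp (2 * μ.re * τ)) Filter.atTop Filter.atTop :=
    Real.tendsto_exp_atTop.comp h1
  exact h2.const_mul_atTop hcpos
end

section
/- For an unstable scalar system with a > 0 and D > 0, the instantaneous MSE m(τ) = (D/(2a))(e^{2aτ} − 1) grows without bound, and for transmission time Δ and error probability ε ∈ [0,1), the lower-bound time-average MSE E[L]/E[T] with geometric retransmissions is finite if and only if ε e^{2aΔ} < 1. -/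
lemma exp_mul_integral (c A B : ℝ) (hc : c ≠ 0) :
    (∫ x in A..B, Real.exp (c * x)) = (Real.exp (c * B) - Real.exp (c * A)) / c := by
  rw [intervalIntegral.integral_comp_mul_left (fun x => Real.exp x) hc, integral_exp]
  rw [smul_eq_mul]
  field_simp

/-- Unstable scalar system (a > 0): m(τ) = (D/(2a))(e^{2aτ}−1) grows without bound, and
the lower-bound time-average MSE with geometric retransmissions is finite iff
ε e^{2aΔ} < 1. -/
theorem stmt14 (a D Δ ε : ℝ) (ha : 0 < a) (hD : 0 < D) (hΔ : 0 < Δ)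
    (hε0 : 0 ≤ ε) (hε1 : ε < 1)
    (m : ℝ → ℝ) (hm : ∀ τ, m τ = (D / (2 * a)) * (Real.exp (2 * a * τ) - 1)) :
    Filter.Tendsto m Filter.atTop Filter.atTop ∧
    ((Summable fun n : ℕ =>
        (1 - ε) * ε ^ n * ∫ τ in Δ..(((n : ℝ) + 2) * Δ), m τ)
      ↔ ε * Real.exp (2 * a * Δ) < 1) := by
  have ha2 : (0:ℝ) < 2 * a := by linarith
  have hc : (0:ℝ) < D / (2 * a) := div_pos hD ha2
  constructor
  · -- tendsto
    have h1 : Filter.Tendsto (fun τ : ℝ => 2 * a * τ) Filter.atTop Filter.atTop :=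
      Filter.Tendsto.const_mul_atTop ha2 Filter.tendsto_id
    have h2 : Filter.Tendsto (fun τ : ℝ => Real.exp (2 * a * τ)) Filter.atTop Filter.atTop :=
      Real.tendsto_exp_atTop.comp h1
    have h3 : Filter.Tendsto (fun τ : ℝ => Real.exp (2 * a * τ) - 1) Filter.atTop Filter.atTop :=
      Filter.tendsto_atTop_add_const_right _ (-1) h2
    have h4 := Filter.Tendsto.const_mul_atTop hc h3
    refine h4.congr fun τ => ?_
    rw [hm]
  · -- summability iff
    set E : ℝ := Real.exp (2 * a * Δ) with hEdef
    have hE0 : 0 < E := Real.exp_pos _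
    have h1ε : (0:ℝ) < 1 - ε := by linarith
    -- compute the integral
    have hint : ∀ n : ℕ, (∫ τ in Δ..(((n : ℝ) + 2) * Δ), m τ) =
        (D / (2 * a)) * ((E ^ (n + 2) - E) / (2 * a) - (((n : ℝ) + 1) * Δ)) := by
      intro n
      simp only [hm]
      rw [intervalIntegral.integral_const_mul]
      congr 1
      rw [intervalIntegral.integral_sub
          ((Continuous.intervalIntegrable (by fun_prop : Continuous fun x : ℝ => Real.exp (2 * a * x)) _ _))
          intervalIntegrable_const,
        exp_mul_integral _ _ _ (ne_of_gt ha2)]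
      have hpow : Real.exp (2 * a * (((n : ℝ) + 2) * Δ)) = E ^ (n + 2) := by
        have : 2 * a * (((n : ℝ) + 2) * Δ) = ((n + 2 : ℕ) : ℝ) * (2 * a * Δ) := by
          push_cast; ring
        rw [this, Real.exp_nat_mul]
      rw [hpow]
      simp only [intervalIntegral.integral_const, smul_eq_mul, mul_one]
      ring
    set A : ℝ := (1 - ε) * (D / (2 * a)) * E ^ 2 / (2 * a) with hAdef
    set B : ℝ := (1 - ε) * (D / (2 * a)) * E / (2 * a) with hBdef
    set C : ℝ := (1 - ε) * (D / (2 * a)) * Δ with hCdef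
    have hA : 0 < A := by positivity
    have hfeq : ∀ n : ℕ, (1 - ε) * ε ^ n * ∫ τ in Δ..(((n : ℝ) + 2) * Δ), m τ
        = A * (ε * E) ^ n - (B * ε ^ n + C * (((n : ℝ) + 1) * ε ^ n)) := by
      intro n
      rw [hint n, hAdef, hBdef, hCdef, mul_pow]
      field_simp
      ring
    have hεn : ‖ε‖ < 1 := by rw [Real.norm_eq_abs, abs_of_nonneg hε0]; exact hε1
    have hd : Summable fun n : ℕ => B * ε ^ n + C * (((n : ℝ) + 1) * ε ^ n) := by
      apply Summable.add
      · exact ((summable_geometric_of_lt_one hε0 hε1).mul_left B)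
      · have h1 : Summable fun n : ℕ => (n : ℝ) ^ 1 * ε ^ n :=
          summable_pow_mul_geometric_of_norm_lt_one 1 hεn
        have h2 : Summable fun n : ℕ => ((n : ℝ) + 1) * ε ^ n := by
          have := h1.add (summable_geometric_of_lt_one hε0 hε1)
          refine this.congr fun n => ?_
          simp; ring
        exact h2.mul_left C
    have hiff : (Summable fun n : ℕ =>
        (1 - ε) * ε ^ n * ∫ τ in Δ..(((n : ℝ) + 2) * Δ), m τ)
        ↔ Summable fun n : ℕ => A * (ε * E) ^ n := by
      constructor
      · intro h
        have := (h.congr hfeq).add hd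
        refine this.congr fun n => ?_
        ring
      · intro h
        refine (h.sub hd).congr fun n => ?_
        rw [hfeq n]
    rw [hiff, summable_mul_left_iff (ne_of_gt hA), summable_geometric_iff_norm_lt_one,
      Real.norm_eq_abs, abs_of_nonneg (by positivity)]
end
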